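/- arXiv:1704.00310 — 2 statements merged into one kernel-verified Lean document; each statement's English description precedes it below -/
import Mathlib

section
/- For a probability measure μ on a measurable space W and a measurable function f : W → ℝ with e^{-f} integrable, the Gibbs variational formula holds: -log ∫ e^{-f} dμ = inf over all probability measures γ ≪ μ with finite relative entropy of ( ∫ f dγ + H(γ|μ) ), and the infimum is attained at dν = (∫ e^{-f} dμ)^{-1} e^{-f} dμ provided H(ν|μ) < ∞. -/
open MeasureTheory

/-- Relative entropy `H(γ|μ) = ∫ log (dγ/dμ) dγ` (as a real integral). -/
noncomputable def relEntropy {W : Type*} [MeasurableSpace W] (γ μ : Measure W) : ℝ :=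
  ∫ x, Real.log (γ.rnDeriv μ x).toReal ∂γ

/-- Gibbs variational formula: `-log ∫ e^{-f} dμ` is the least value of
`∫ f dγ + H(γ|μ)` over probability measures `γ ≪ μ` with finite relative entropy,
the minimum being attained at `dν = (∫ e^{-f}dμ)⁻¹ e^{-f} dμ` when `H(ν|μ) < ∞`. -/
theorem gibbs_variational_formula {W : Type*} [MeasurableSpace W] (μ : Measure W)
    [IsProbabilityMeasure μ] (f : W → ℝ) (hf : Measurable f)
    (hint : Integrable (fun x => Real.exp (-f x)) μ)
    (hpos : 0 < ∫ x, Real.exp (-f x) ∂μ)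
    (ν : Measure W)
    (hν : ν = μ.withDensity
      (fun x => ENNReal.ofReal ((∫ y, Real.exp (-f y) ∂μ)⁻¹ * Real.exp (-f x))))
    (hνent : Integrable (fun x => Real.log (ν.rnDeriv μ x).toReal) ν)
    (hνf : Integrable f ν) :
    IsLeast
      {r : ℝ | ∃ γ : Measure W, IsProbabilityMeasure γ ∧ γ ≪ μ ∧
        Integrable f γ ∧ Integrable (fun x => Real.log (γ.rnDeriv μ x).toReal) γ ∧
        r = ∫ x, f x ∂γ + relEntropy γ μ}
      (-Real.log (∫ x, Real.exp (-f x) ∂μ)) := by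
  set Z : ℝ := ∫ x, Real.exp (-f x) ∂μ with hZ
  have hZpos : 0 < Z := hpos
  have hg : Measurable (fun x => ENNReal.ofReal (Z⁻¹ * Real.exp (-f x))) :=
    (measurable_const.mul (hf.neg.exp)).ennreal_ofReal
  have hνμ : ν ≪ μ := hν ▸ withDensity_absolutelyContinuous μ _
  have hrnν : ν.rnDeriv μ =ᵐ[μ] fun x => ENNReal.ofReal (Z⁻¹ * Real.exp (-f x)) := by
    rw [hν]; exact Measure.rnDeriv_withDensity μ hg
  have hνprob : IsProbabilityMeasure ν := by
    constructor
    rw [hν, withDensity_apply _ MeasurableSet.univ, Measure.restrict_univ,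
      ← ofReal_integral_eq_lintegral_ofReal (hint.const_mul Z⁻¹)
        (.of_forall fun x => by positivity)]
    rw [integral_const_mul, ← hZ, inv_mul_cancel₀ hZpos.ne', ENNReal.ofReal_one]
  constructor
  · refine ⟨ν, hνprob, hνμ, hνf, hνent, ?_⟩
    have hlog : (fun x => Real.log (ν.rnDeriv μ x).toReal)
        =ᵐ[ν] fun x => -Real.log Z - f x := by
      filter_upwards [hνμ.ae_le hrnν] with x hx
      rw [hx, ENNReal.toReal_ofReal (by positivity), Real.log_mul (by positivity)
        (Real.exp_pos _).ne', Real.log_inv, Real.log_exp]; ring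
    have : relEntropy ν μ = -Real.log Z - ∫ x, f x ∂ν := by
      rw [relEntropy, integral_congr_ae hlog, integral_sub (integrable_const _) hνf,
        integral_const, probReal_univ, one_smul]
    rw [this]; ring
  · rintro s ⟨γ, hγprob, hγμ, hγf, hγlog, rfl⟩
    set ρ : W → ℝ := fun x => (γ.rnDeriv μ x).toReal with hρ
    have hρmeas : Measurable ρ := (Measure.measurable_rnDeriv γ μ).ennreal_toReal
    set t : W → ℝ := fun x => Z⁻¹ * Real.exp (-f x) / ρ x with ht
    have htmeas : Measurable t := (measurable_const.mul hf.neg.exp).div hρmeas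
    -- r * t dominated
    have hbound : ∀ x, |ρ x * t x| ≤ Z⁻¹ * Real.exp (-f x) := by
      intro x
      rcases eq_or_ne (ρ x) 0 with h | h
      · simp [ht, h]; positivity
      · rw [ht]; simp only
        rw [mul_div_cancel₀ _ h, abs_of_nonneg (by positivity)]
    have hμint : Integrable (fun x => ρ x * t x) μ :=
      Integrable.mono' (hint.const_mul Z⁻¹) (hρmeas.mul htmeas).aestronglyMeasurable
        (.of_forall hbound)
    have hγt : Integrable t γ := (integrable_rnDeriv_smul_iff hγμ).mp (by
      simpa [smul_eq_mul] using hμint)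
    have htint : ∫ x, t x ∂γ ≤ 1 := by
      have h1 : ∫ x, t x ∂γ = ∫ x, ρ x * t x ∂μ := by
        rw [← integral_rnDeriv_smul hγμ]; rfl
      rw [h1]
      calc ∫ x, ρ x * t x ∂μ ≤ ∫ x, Z⁻¹ * Real.exp (-f x) ∂μ := by
            refine integral_mono hμint (hint.const_mul Z⁻¹) fun x => ?_
            exact (le_abs_self _).trans (hbound x)
        _ = 1 := by rw [integral_const_mul, ← hZ, inv_mul_cancel₀ hZpos.ne']
    -- pointwise inequality γ-a.e.
    have hpt : ∀ᵐ x ∂γ, 1 - t x ≤ f x + Real.log Z + Real.log (ρ x) := by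
      filter_upwards [Measure.rnDeriv_pos hγμ,
        hγμ.ae_le (Measure.rnDeriv_lt_top γ μ)] with x h0 hfin
      have hρpos : 0 < ρ x := ENNReal.toReal_pos h0.ne' hfin.ne
      have htpos : 0 < t x := by rw [ht]; positivity
      have hlogt : Real.log (t x) = -(f x + Real.log Z + Real.log (ρ x)) := by
        rw [ht]; simp only
        rw [Real.log_div (by positivity) hρpos.ne', Real.log_mul (by positivity)
          (Real.exp_pos _).ne', Real.log_inv, Real.log_exp]
        ring
      have := Real.log_le_sub_one_of_pos htpos
      rw [hlogt] at this
      linarith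
    have hadd : Integrable (fun x => f x + Real.log Z) γ := hγf.add (integrable_const _)
    have key : 0 ≤ ∫ x, (f x + Real.log Z + Real.log (ρ x)) ∂γ := by
      have h1 : ∫ x, (1 - t x) ∂γ ≤ ∫ x, (f x + Real.log Z + Real.log (ρ x)) ∂γ :=
        integral_mono_ae ((integrable_const 1).sub hγt)
          (hadd.add hγlog) hpt
      have h2 : ∫ x, (1 - t x) ∂γ = 1 - ∫ x, t x ∂γ := by
        rw [integral_sub (integrable_const 1) hγt, integral_const, probReal_univ,
          one_smul]
      linarith
    have hsplit : ∫ x, (f x + Real.log Z + Real.log (ρ x)) ∂γ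
        = ∫ x, f x ∂γ + Real.log Z + relEntropy γ μ := by
      rw [integral_add hadd hγlog,
        integral_add hγf (integrable_const _), integral_const, probReal_univ,
        one_smul]
      rfl
    rw [hsplit] at key
    linarith
end

section
/- Let μ be a probability measure, f measurable with ν defined by dν = c e^{-f} dμ a probability measure (c the normalizing constant). Then for any measurable map U with U_*ν ≪ ν, the relative entropy satisfies H(U_*ν | ν) = ∫ (f ∘ U − f − log Λ_u) dν, where Λ_u satisfies ( (dU_*ν/dν) e^{-f} ) ∘ U · Λ_u = e^{-f} ν-a.s. -/
open MeasureTheory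

/-- for `dν = c e^{-f} dμ` a probability measure and `U` a measurable
map with `U_*ν ≪ ν`, writing `l_U = d(U_*ν)/dν` and `Λ_u` the Jacobian with
`(l_U e^{-f}) ∘ U · Λ_u = e^{-f}` ν-a.s., the relative entropy satisfies
`H(U_*ν | ν) = ∫ (f∘U − f − log Λ_u) dν`. -/
theorem entropy_formula_perturbation {W : Type*} [MeasurableSpace W]
    (μ : Measure W) [IsProbabilityMeasure μ]
    (f : W → ℝ) (hf : Measurable f) (c : ℝ) (hc : 0 < c)
    (ν : Measure W)
    (hν : ν = μ.withDensity (fun x => ENNReal.ofReal (c * Real.exp (-f x))))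
    (hνprob : IsProbabilityMeasure ν)
    (U : W → W) (hU : Measurable U)
    (hac : ν.map U ≪ ν)
    (Λ : W → ℝ) (hΛ : Measurable Λ) (hΛpos : ∀ᵐ x ∂ν, 0 < Λ x)
    (hjac : ∀ᵐ x ∂ν,
      ((ν.map U).rnDeriv ν (U x)).toReal * Real.exp (-f (U x)) * Λ x
        = Real.exp (-f x))
    (hint1 : Integrable (fun x => Real.log ((ν.map U).rnDeriv ν x).toReal) (ν.map U))
    (hint2 : Integrable (fun x => f (U x) - f x - Real.log (Λ x)) ν) :
    ∫ x, Real.log ((ν.map U).rnDeriv ν x).toReal ∂(ν.map U)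
      = ∫ x, (f (U x) - f x - Real.log (Λ x)) ∂ν := by
  rw [integral_map hU.aemeasurable
    ((Measure.measurable_rnDeriv _ _).ennreal_toReal.log.aestronglyMeasurable)]
  refine integral_congr_ae ?_
  filter_upwards [hjac, hΛpos] with x hx hΛx
  have hfx : (0:ℝ) < Real.exp (-f x) := Real.exp_pos _
  have hfU : (0:ℝ) < Real.exp (-f (U x)) := Real.exp_pos _
  have hr : (0:ℝ) < ((ν.map U).rnDeriv ν (U x)).toReal := by
    by_contra h
    push_neg at h
    have h0 : ((ν.map U).rnDeriv ν (U x)).toReal = 0 :=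
      le_antisymm h ENNReal.toReal_nonneg
    rw [h0, zero_mul, zero_mul] at hx
    exact absurd hx.symm (ne_of_gt hfx)
  have hlog := congrArg Real.log hx
  rw [Real.log_mul (by positivity) (ne_of_gt hΛx),
    Real.log_mul (ne_of_gt hr) (ne_of_gt hfU), Real.log_exp, Real.log_exp] at hlog
  linarith
end
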